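/- arXiv:2509.18025 — 2 statements merged into one kernel-verified Lean document; each statement's English description precedes it below -/
import Mathlib

section
/- (Definable Choice) Let 𝓡 be an o-minimal structure on ℝ and let X ⊆ ℝ^{m+n} be definable. Write π_m : ℝ^{m+n} → ℝ^m for projection onto the first m coordinates and, for a ∈ ℝ^m, write X_a = {b ∈ ℝ^n : (a,b) ∈ X}. Then there exists a definable map ρ : π_m(X) → ℝ^n such that (1) ρ(a) ∈ X_a for every a ∈ π_m(X) (so the graph of ρ is contained in X), and (2) for every a, a' ∈ π_m(X), if X_a = X_{a'} then ρ(a) = ρ(a'). -/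
/-- A structure on ℝ in the sense of tame geometry: axioms (S1)-(S4).
`sets n` is the collection of definable subsets of ℝ^n. -/
structure RealStructure where
  sets : ∀ n : ℕ, Set (Set (Fin n → ℝ))
  /-- (S1) each `sets n` is a boolean algebra of subsets of ℝ^n -/
  empty_mem : ∀ n, (∅ : Set (Fin n → ℝ)) ∈ sets n
  univ_mem : ∀ n, (Set.univ : Set (Fin n → ℝ)) ∈ sets n
  union_mem : ∀ n, ∀ A B : Set (Fin n → ℝ), A ∈ sets n → B ∈ sets n → A ∪ B ∈ sets n
  compl_mem : ∀ n, ∀ A : Set (Fin n → ℝ), A ∈ sets n → Aᶜ ∈ sets n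
  /-- (S2) if A ∈ 𝓡_n then ℝ × A ∈ 𝓡_{n+1} -/
  prod_left_mem : ∀ n, ∀ A : Set (Fin n → ℝ), A ∈ sets n →
    {x : Fin (n + 1) → ℝ | (fun i : Fin n => x i.succ) ∈ A} ∈ sets (n + 1)
  /-- (S2) if A ∈ 𝓡_n then A × ℝ ∈ 𝓡_{n+1} -/
  prod_right_mem : ∀ n, ∀ A : Set (Fin n → ℝ), A ∈ sets n →
    {x : Fin (n + 1) → ℝ | (fun i : Fin n => x i.castSucc) ∈ A} ∈ sets (n + 1)
  /-- (S3) the diagonal {x : x₁ = x_n} is definable -/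
  diag_mem : ∀ n : ℕ, {x : Fin (n + 1) → ℝ | x 0 = x (Fin.last n)} ∈ sets (n + 1)
  /-- (S4) projection onto the first n coordinates preserves definability -/
  proj_mem : ∀ n, ∀ A : Set (Fin (n + 1) → ℝ), A ∈ sets (n + 1) →
    (fun (x : Fin (n + 1) → ℝ) (i : Fin n) => x i.castSucc) '' A ∈ sets n

/-- An open interval (possibly unbounded) or a point in ℝ. -/
def IsOpenIntervalOrPoint (I : Set ℝ) : Prop :=
  (∃ a b : ℝ, I = Set.Ioo a b) ∨ (∃ a : ℝ, I = Set.Ioi a) ∨ (∃ a : ℝ, I = Set.Iio a) ∨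
    I = Set.univ ∨ (∃ a : ℝ, I = {a})

/-- An o-minimal structure on ℝ: a structure satisfying moreover (S5), (S6), (O1), (O2). -/
structure OminimalStructure extends RealStructure where
  /-- (S5) singletons are definable -/
  singleton_mem : ∀ a : ℝ, {x : Fin 1 → ℝ | x 0 = a} ∈ sets 1
  /-- (S6) the graph of addition is definable -/
  add_graph_mem : {x : Fin 3 → ℝ | x 2 = x 0 + x 1} ∈ sets 3
  /-- (S6) the graph of multiplication is definable -/
  mul_graph_mem : {x : Fin 3 → ℝ | x 2 = x 0 * x 1} ∈ sets 3
  /-- (O1) the order is definable -/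
  lt_mem : {x : Fin 2 → ℝ | x 0 < x 1} ∈ sets 2
  /-- (O2) the definable subsets of ℝ are exactly the finite unions of open
  intervals and points -/
  omin : ∀ A : Set (Fin 1 → ℝ), A ∈ sets 1 ↔
    ∃ T : Finset (Set ℝ), (∀ I ∈ T, IsOpenIntervalOrPoint I) ∧
      A = (fun x : Fin 1 → ℝ => x 0) ⁻¹' ⋃ I ∈ T, I

namespace RealStructure
variable (R : RealStructure)

theorem congr_mem {n} {A B : Set (Fin n → ℝ)} (h : A ∈ R.sets n) (e : B = A) :
    B ∈ R.sets n := e ▸ h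

theorem inter_mem {n} {A B : Set (Fin n → ℝ)} (hA : A ∈ R.sets n) (hB : B ∈ R.sets n) :
    A ∩ B ∈ R.sets n := by
  have := R.compl_mem n _ (R.union_mem n _ _ (R.compl_mem n A hA) (R.compl_mem n B hB))
  refine R.congr_mem this ?_
  rw [Set.compl_union, compl_compl, compl_compl]

theorem cast_mem {n m : ℕ} (h : n = m) {A : Set (Fin n → ℝ)} (hA : A ∈ R.sets n) :
    {x : Fin m → ℝ | (fun i : Fin n => x (Fin.cast h i)) ∈ A} ∈ R.sets m := by
  subst h
  exact hA

theorem iInter_mem {n : ℕ} : ∀ (k : ℕ) (f : Fin k → Set (Fin n → ℝ)),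
    (∀ i, f i ∈ R.sets n) → (⋂ i, f i) ∈ R.sets n := by
  intro k
  induction k with
  | zero =>
    intro f _
    refine R.congr_mem (R.univ_mem n) ?_
    simp
  | succ k ih =>
    intro f hf
    have h1 : (f 0 ∩ ⋂ i : Fin k, f i.succ) ∈ R.sets n :=
      R.inter_mem (hf 0) (ih _ (fun i => hf i.succ))
    refine R.congr_mem h1 ?_
    ext x
    simp [Set.mem_iInter, Fin.forall_fin_succ]

theorem padRight : ∀ (k n : ℕ) (A : Set (Fin n → ℝ)), A ∈ R.sets n →
    {x : Fin (n + k) → ℝ | (fun i : Fin n => x (Fin.castAdd k i)) ∈ A} ∈ R.sets (n + k) := by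
  intro k
  induction k with
  | zero =>
    intro n A hA
    exact hA
  | succ k ih =>
    intro n A hA
    have h1 := ih n A hA
    have h2 := R.prod_right_mem (n + k) _ h1
    refine R.congr_mem h2 ?_
    ext x
    simp only [Set.mem_setOf_eq]
    rw [show (fun i : Fin n => x (Fin.castAdd (k+1) i))
        = (fun i : Fin n => x ((Fin.castAdd k i).castSucc)) from
      funext fun i => congrArg x (Fin.ext (by simp))]
    exact Iff.rfl

theorem padLeft : ∀ (k n : ℕ) (A : Set (Fin n → ℝ)), A ∈ R.sets n →
    {x : Fin (k + n) → ℝ | (fun i : Fin n => x (Fin.natAdd k i)) ∈ A} ∈ R.sets (k + n) := by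
  intro k
  induction k with
  | zero =>
    intro n A hA
    have h1 := R.cast_mem (Nat.zero_add n).symm hA
    refine R.congr_mem h1 ?_
    ext x
    simp only [Set.mem_setOf_eq]
    rw [show (fun i : Fin n => x (Fin.natAdd 0 i))
        = (fun i : Fin n => x (Fin.cast (Nat.zero_add n).symm i)) from
      funext fun i => congrArg x (Fin.ext (by simp))]
  | succ k ih =>
    intro n A hA
    have h1 := R.prod_left_mem n A hA
    have h2 := ih (n + 1) _ h1
    have h3 := R.cast_mem (show k + (n+1) = (k+1) + n by omega) h2
    refine R.congr_mem h3 ?_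
    ext x
    simp only [Set.mem_setOf_eq]
    rw [show (fun i : Fin n => x (Fin.natAdd (k+1) i))
        = (fun i : Fin n => x (Fin.cast (show k + (n+1) = (k+1) + n by omega)
            (Fin.natAdd k i.succ))) from
      funext fun i => congrArg x (Fin.ext (by simp; omega))]

theorem eq_mem_le (n : ℕ) (i j : Fin n) (hij : (i : ℕ) ≤ (j : ℕ)) :
    {x : Fin n → ℝ | x i = x j} ∈ R.sets n := by
  set a := (i : ℕ) with ha
  set d := (j : ℕ) - (i : ℕ) with hd
  set b := n - 1 - (j : ℕ) with hb
  have hdim : a + ((d + 1) + b) = n := by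
    have := j.isLt
    omega
  have h1 := R.diag_mem d
  have h2 := R.padRight b (d + 1) _ h1
  have h3 := R.padLeft a ((d + 1) + b) _ h2
  have h4 := R.cast_mem hdim h3
  refine R.congr_mem h4 ?_
  ext x
  simp only [Set.mem_setOf_eq]
  rw [show Fin.cast hdim (Fin.natAdd a (Fin.castAdd b (0 : Fin (d + 1)))) = i from
      Fin.ext (by simp; exact ha),
    show Fin.cast hdim (Fin.natAdd a (Fin.castAdd b (Fin.last d))) = j from
      Fin.ext (by simp; omega)]

theorem eq_mem (n : ℕ) (i j : Fin n) : {x : Fin n → ℝ | x i = x j} ∈ R.sets n := by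
  rcases le_or_gt (i : ℕ) (j : ℕ) with hij | hij
  · exact R.eq_mem_le n i j hij
  · have h := R.eq_mem_le n j i hij.le
    refine R.congr_mem h ?_
    ext x
    exact eq_comm

theorem exists_last_mem {n : ℕ} {A : Set (Fin (n + 1) → ℝ)} (hA : A ∈ R.sets (n + 1)) :
    {x : Fin n → ℝ | ∃ t : ℝ, Fin.snoc x t ∈ A} ∈ R.sets n := by
  have h := R.proj_mem n A hA
  refine R.congr_mem h ?_
  ext x
  simp only [Set.mem_setOf_eq, Set.mem_image]
  constructor
  · rintro ⟨t, ht⟩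
    exact ⟨Fin.snoc x t, ht, by funext i; simp⟩
  · rintro ⟨w, hw, hwx⟩
    refine ⟨w (Fin.last n), ?_⟩
    have : Fin.snoc x (w (Fin.last n)) = w := by
      rw [← hwx]
      exact Fin.snoc_init_self w
    rwa [this]

theorem proj_many : ∀ (k n : ℕ) (A : Set (Fin (n + k) → ℝ)), A ∈ R.sets (n + k) →
    {x : Fin n → ℝ | ∃ y : Fin k → ℝ, Fin.append x y ∈ A} ∈ R.sets n := by
  intro k
  induction k with
  | zero =>
    intro n A hA
    refine R.congr_mem hA ?_
    ext x
    simp only [Set.mem_setOf_eq]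
    constructor
    · rintro ⟨y, hy⟩
      have : Fin.append x y = x := by
        funext i
        refine Fin.addCases (fun j => ?_) (fun j => j.elim0) i
        rw [Fin.append_left]
        exact congrArg x (Fin.ext rfl)
      rwa [this] at hy
    · intro hx
      refine ⟨Fin.elim0, ?_⟩
      have : Fin.append x (Fin.elim0 : Fin 0 → ℝ) = x := by
        funext i
        refine Fin.addCases (fun j => ?_) (fun j => j.elim0) i
        rw [Fin.append_left]
        exact congrArg x (Fin.ext rfl)
      rwa [this]
  | succ k ih =>
    intro n A hA
    have h1 : {w : Fin (n + k) → ℝ | ∃ t : ℝ, Fin.snoc w t ∈ A} ∈ R.sets (n + k) :=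
      R.exists_last_mem hA
    have h2 := ih n _ h1
    refine R.congr_mem h2 ?_
    ext x
    simp only [Set.mem_setOf_eq]
    constructor
    · rintro ⟨y, hy⟩
      refine ⟨fun i => y i.castSucc, y (Fin.last k), ?_⟩
      have : Fin.snoc (Fin.append x fun i => y i.castSucc) (y (Fin.last k))
          = Fin.append x y := by
        rw [show (fun i => y i.castSucc) = Fin.init y from rfl, ← Fin.append_snoc,
          Fin.snoc_init_self]
      rwa [this]
    · rintro ⟨y', t, ht⟩
      exact ⟨Fin.snoc y' t, by rwa [Fin.append_snoc]⟩

theorem subst_mem {k n : ℕ} (σ : Fin k → Fin n) {B : Set (Fin k → ℝ)} (hB : B ∈ R.sets k) :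
    {x : Fin n → ℝ | (fun i : Fin k => x (σ i)) ∈ B} ∈ R.sets n := by
  set D : Set (Fin (n + k) → ℝ) :=
    {w | (fun i : Fin k => w (Fin.natAdd n i)) ∈ B} ∩
      ⋂ i : Fin k, {w | w (Fin.natAdd n i) = w (Fin.castAdd k (σ i))} with hD
  have hDmem : D ∈ R.sets (n + k) := by
    refine R.inter_mem (R.padLeft n k B hB) (R.iInter_mem k _ (fun i => R.eq_mem _ _ _))
  have h2 := R.proj_many k n D hDmem
  refine R.congr_mem h2 ?_
  ext x
  simp only [Set.mem_setOf_eq]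
  constructor
  · intro hx
    refine ⟨fun i => x (σ i), ?_⟩
    constructor
    · simpa only [Set.mem_setOf_eq, Fin.append_right] using hx
    · simp only [Set.mem_iInter, Set.mem_setOf_eq]
      intro i
      rw [Fin.append_right, Fin.append_left]
  · rintro ⟨y, hy1, hy2⟩
    simp only [Set.mem_iInter, Set.mem_setOf_eq, Fin.append_right, Fin.append_left] at hy1 hy2
    have : (fun i : Fin k => x (σ i)) = y := by
      funext i
      exact (hy2 i).symm
    rwa [this]

/-- Existential quantification over the last variable, convenient form. -/
theorem exS {n : ℕ} (P : (Fin n → ℝ) → ℝ → Prop)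
    (h : {x : Fin (n + 1) → ℝ | P (fun i : Fin n => x i.castSucc) (x (Fin.last n))}
      ∈ R.sets (n + 1)) :
    {x : Fin n → ℝ | ∃ t : ℝ, P x t} ∈ R.sets n := by
  have h2 := R.exists_last_mem h
  refine R.congr_mem h2 ?_
  ext x
  simp only [Set.mem_setOf_eq]
  refine exists_congr fun t => ?_
  rw [show (fun i : Fin n => (Fin.snoc x t : Fin (n + 1) → ℝ) i.castSucc) = x from
    funext fun i => by simp, Fin.snoc_last]

theorem setOf_compl {n : ℕ} (P : (Fin n → ℝ) → Prop)
    (h : {x : Fin n → ℝ | P x} ∈ R.sets n) : {x : Fin n → ℝ | ¬ P x} ∈ R.sets n :=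
  R.congr_mem (R.compl_mem n _ h) rfl

theorem setOf_and {n : ℕ} {P Q : (Fin n → ℝ) → Prop}
    (hP : {x : Fin n → ℝ | P x} ∈ R.sets n) (hQ : {x : Fin n → ℝ | Q x} ∈ R.sets n) :
    {x : Fin n → ℝ | P x ∧ Q x} ∈ R.sets n :=
  R.congr_mem (R.inter_mem hP hQ) rfl

theorem setOf_or {n : ℕ} {P Q : (Fin n → ℝ) → Prop}
    (hP : {x : Fin n → ℝ | P x} ∈ R.sets n) (hQ : {x : Fin n → ℝ | Q x} ∈ R.sets n) :
    {x : Fin n → ℝ | P x ∨ Q x} ∈ R.sets n :=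
  R.congr_mem (R.union_mem n _ _ hP hQ) rfl

theorem setOf_imp {n : ℕ} {P Q : (Fin n → ℝ) → Prop}
    (hP : {x : Fin n → ℝ | P x} ∈ R.sets n) (hQ : {x : Fin n → ℝ | Q x} ∈ R.sets n) :
    {x : Fin n → ℝ | P x → Q x} ∈ R.sets n := by
  refine R.congr_mem (R.setOf_or (R.setOf_compl P hP) hQ) ?_
  ext x
  simp only [Set.mem_setOf_eq]
  tauto

/-- Universal quantification over the last variable. -/
theorem allS {n : ℕ} (P : (Fin n → ℝ) → ℝ → Prop)
    (h : {x : Fin (n + 1) → ℝ | P (fun i : Fin n => x i.castSucc) (x (Fin.last n))}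
      ∈ R.sets (n + 1)) :
    {x : Fin n → ℝ | ∀ t : ℝ, P x t} ∈ R.sets n := by
  have h1 : {x : Fin (n + 1) → ℝ |
      ¬ P (fun i : Fin n => x i.castSucc) (x (Fin.last n))} ∈ R.sets (n + 1) :=
    R.setOf_compl _ h
  have h2 := R.exS (fun x t => ¬ P x t) h1
  have h3 := R.setOf_compl _ h2
  refine R.congr_mem h3 ?_
  ext x
  simp only [Set.mem_setOf_eq]
  constructor
  · rintro h' ⟨t, ht⟩
    exact ht (h' t)
  · intro h' t
    by_contra hc
    exact h' ⟨t, hc⟩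

end RealStructure

namespace OminimalStructure
variable (R : OminimalStructure)

theorem lt_set {n : ℕ} (i j : Fin n) : {x : Fin n → ℝ | x i < x j} ∈ R.sets n := by
  have h := R.toRealStructure.subst_mem (![i, j]) R.lt_mem
  refine R.toRealStructure.congr_mem h ?_
  ext x
  simp only [Set.mem_setOf_eq]
  exact Iff.rfl

theorem le_set {n : ℕ} (i j : Fin n) : {x : Fin n → ℝ | x i ≤ x j} ∈ R.sets n := by
  have h := R.toRealStructure.setOf_compl _ (R.lt_set j i)
  refine R.toRealStructure.congr_mem h ?_
  ext x
  simp only [Set.mem_setOf_eq, not_lt]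

theorem add_set {n : ℕ} (p q r : Fin n) : {x : Fin n → ℝ | x p = x q + x r} ∈ R.sets n := by
  have h := R.toRealStructure.subst_mem (![q, r, p]) R.add_graph_mem
  refine R.toRealStructure.congr_mem h ?_
  ext x
  simp only [Set.mem_setOf_eq]
  exact Iff.rfl

theorem const_set {n : ℕ} (i : Fin n) (a : ℝ) : {x : Fin n → ℝ | x i = a} ∈ R.sets n := by
  have h := R.toRealStructure.subst_mem (fun _ : Fin 1 => i) (R.singleton_mem a)
  refine R.toRealStructure.congr_mem h ?_
  ext x
  simp only [Set.mem_setOf_eq]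

theorem add_const_set {n : ℕ} (i j : Fin n) (a : ℝ) :
    {x : Fin n → ℝ | x i = x j + a} ∈ R.sets n := by
  have e : {x : Fin n → ℝ | x i = x j + a} = {x : Fin n → ℝ | ∃ o : ℝ, o = a ∧ x i = x j + o} := by
    ext x
    simp only [Set.mem_setOf_eq]
    constructor
    · intro h; exact ⟨a, rfl, h⟩
    · rintro ⟨o, rfl, h⟩; exact h
  rw [e]
  exact R.toRealStructure.exS (fun x o => o = a ∧ x i = x j + o)
    (R.toRealStructure.setOf_and (R.const_set (Fin.last n) a)
      (R.add_set i.castSucc j.castSucc (Fin.last n)))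

theorem add_eq_add_set {n : ℕ} (p p' q r : Fin n) :
    {x : Fin n → ℝ | x p + x p' = x q + x r} ∈ R.sets n := by
  have e : {x : Fin n → ℝ | x p + x p' = x q + x r}
      = {x : Fin n → ℝ | ∃ s : ℝ, s = x p + x p' ∧ s = x q + x r} := by
    ext x
    simp only [Set.mem_setOf_eq]
    constructor
    · intro h; exact ⟨x p + x p', rfl, h⟩
    · rintro ⟨s, h1, h2⟩; rw [← h1, h2]
  rw [e]
  exact R.toRealStructure.exS (fun x s => s = x p + x p' ∧ s = x q + x r)
    (R.toRealStructure.setOf_and (R.add_set (Fin.last n) p.castSucc p'.castSucc)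
      (R.add_set (Fin.last n) q.castSucc r.castSucc))

end OminimalStructure

namespace RealStructure
variable (R : RealStructure)

theorem setOf_forall_fin {n k : ℕ} (Q : Fin k → (Fin n → ℝ) → Prop)
    (h : ∀ i, {x : Fin n → ℝ | Q i x} ∈ R.sets n) :
    {x : Fin n → ℝ | ∀ i, Q i x} ∈ R.sets n := by
  refine R.congr_mem (R.iInter_mem k _ h) ?_
  ext x
  simp [Set.mem_iInter]

theorem exists_many {n k : ℕ} (P : (Fin n → ℝ) → (Fin k → ℝ) → Prop)
    (h : {x : Fin (n + k) → ℝ |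
        P (fun i : Fin n => x (Fin.castAdd k i)) (fun i : Fin k => x (Fin.natAdd n i))}
      ∈ R.sets (n + k)) :
    {x : Fin n → ℝ | ∃ y : Fin k → ℝ, P x y} ∈ R.sets n := by
  have h2 := R.proj_many k n _ h
  refine R.congr_mem h2 ?_
  ext x
  simp only [Set.mem_setOf_eq]
  refine exists_congr fun y => ?_
  rw [show (fun i : Fin n => Fin.append x y (Fin.castAdd k i)) = x from
      funext fun i => Fin.append_left x y i,
    show (fun i : Fin k => Fin.append x y (Fin.natAdd n i)) = y from
      funext fun i => Fin.append_right x y i]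

theorem fib_atom {M N : ℕ} {X : Set (Fin (M + 1) → ℝ)} (hX : X ∈ R.sets (M + 1))
    (τ : Fin M → Fin N) (p : Fin N) :
    {x : Fin N → ℝ | Fin.snoc (fun i : Fin M => x (τ i)) (x p) ∈ X} ∈ R.sets N := by
  have h := R.subst_mem (fun j : Fin (M + 1) => if h : (j : ℕ) < M then τ ⟨j, h⟩ else p) hX
  refine R.congr_mem h ?_
  ext x
  simp only [Set.mem_setOf_eq]
  suffices e : Fin.snoc (fun i : Fin M => x (τ i)) (x p)
      = (fun j : Fin (M + 1) => x (if h : (j : ℕ) < M then τ ⟨j, h⟩ else p)) by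
    rw [e]
  funext j
  refine Fin.lastCases ?_ (fun i => ?_) j
  · rw [Fin.snoc_last]
    simp
  · rw [Fin.snoc_castSucc]
    have hc : ((i.castSucc : Fin (M + 1)) : ℕ) = (i : ℕ) := rfl
    simp [hc, i.isLt]

end RealStructure

namespace OminimalStructure
variable (R : OminimalStructure)

theorem fiber_mem {M : ℕ} {X : Set (Fin (M + 1) → ℝ)} (hX : X ∈ R.sets (M + 1))
    (c : Fin M → ℝ) :
    {x : Fin 1 → ℝ | Fin.snoc c (x 0) ∈ X} ∈ R.sets 1 := by
  have e : {x : Fin 1 → ℝ | Fin.snoc c (x 0) ∈ X}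
      = {x : Fin 1 → ℝ | ∃ y : Fin M → ℝ, (∀ i, y i = c i) ∧ Fin.snoc y (x 0) ∈ X} := by
    ext x
    simp only [Set.mem_setOf_eq]
    constructor
    · intro hx; exact ⟨c, fun i => rfl, hx⟩
    · rintro ⟨y, hy, hx⟩
      have : y = c := funext hy
      rwa [this] at hx
  rw [e]
  refine R.toRealStructure.exists_many
    (fun (x : Fin 1 → ℝ) (y : Fin M → ℝ) => (∀ i, y i = c i) ∧ Fin.snoc y (x 0) ∈ X) ?_
  refine R.toRealStructure.setOf_and ?_ ?_
  · exact R.toRealStructure.setOf_forall_fin _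
      (fun i => R.const_set (Fin.natAdd 1 i) (c i))
  · exact R.toRealStructure.fib_atom hX (fun i => Fin.natAdd 1 i) (Fin.castAdd M (0 : Fin 1))

end OminimalStructure


namespace DefChoice

def phi1 (A : Set ℝ) (y : ℝ) : Prop := y ∈ A ∧ ∀ t ∈ A, y ≤ t

def phi2 (A : Set ℝ) (y : ℝ) : Prop :=
  ∃ c, c ∉ A ∧ (∀ t ∈ A, c ≤ t) ∧ (∀ t, c < t → t ∈ A) ∧ y = c + 1

def phi3 (A : Set ℝ) (y : ℝ) : Prop :=
  ∃ c d, c ∉ A ∧ (∀ t ∈ A, c ≤ t) ∧ c < d ∧ (∀ t, c < t → t < d → t ∈ A) ∧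
    (∀ e, d < e → ∃ t, c < t ∧ t < e ∧ t ∉ A) ∧ y + y = c + d

def phi4 (A : Set ℝ) (y : ℝ) : Prop := (∀ t, t ∈ A) ∧ y = 0

def phi5 (A : Set ℝ) (y : ℝ) : Prop :=
  ∃ d, (∀ t, t < d → t ∈ A) ∧ (∀ e, d < e → ∃ t, t < e ∧ t ∉ A) ∧ d = y + 1

def Phi (A : Set ℝ) (y : ℝ) : Prop :=
  phi1 A y ∨ phi2 A y ∨ phi3 A y ∨ phi4 A y ∨ phi5 A y

theorem Phi_mem {A : Set ℝ} {y : ℝ} (h : Phi A y) : y ∈ A := by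
  rcases h with h | h | h | h | h
  · exact h.1
  · obtain ⟨c, _, _, hIoi, hy⟩ := h
    exact hIoi y (by rw [hy]; linarith)
  · obtain ⟨c, d, _, _, hcd, hIoo, _, hy⟩ := h
    exact hIoo y (by linarith) (by linarith)
  · exact h.1 y
  · obtain ⟨d, hIio, _, hy⟩ := h
    exact hIio y (by linarith)

theorem Phi_unique {A : Set ℝ} {y y' : ℝ} (h : Phi A y) (h' : Phi A y') : y = y' := by
  -- exclusion and uniqueness case bash
  rcases h with h | h | h | h | h <;> rcases h' with h' | h' | h' | h' | h'
  -- 1,1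
  · exact le_antisymm (h.2 y' h'.1) (h'.2 y h.1)
  -- 1,2
  · obtain ⟨c, hcA, hlb, hIoi, _⟩ := h'
    have hcy : c < y := lt_of_le_of_ne (hlb y h.1) (fun e => hcA (e ▸ h.1))
    have : (c + y)/2 ∈ A := hIoi _ (by linarith)
    have := h.2 _ this
    linarith
  -- 1,3
  · obtain ⟨c, d, hcA, hlb, hcd, hIoo, _, _⟩ := h'
    have hcy : c < y := lt_of_le_of_ne (hlb y h.1) (fun e => hcA (e ▸ h.1))
    set t := min ((c + y)/2) ((c + d)/2) with ht
    have h1 : c < t := lt_min (by linarith) (by linarith)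
    have h2 : t < d := lt_of_le_of_lt (min_le_right _ _) (by linarith)
    have h3 : t < y := lt_of_le_of_lt (min_le_left _ _) (by linarith)
    have := h.2 t (hIoo t h1 h2)
    linarith
  -- 1,4
  · have : y - 1 ∈ A := h'.1 _
    have := h.2 _ this
    linarith
  -- 1,5
  · obtain ⟨d, hIio, _, _⟩ := h'
    have : min y d - 1 ∈ A := hIio _ (by
      have := min_le_right y d; linarith)
    have := h.2 _ this
    have := min_le_left y d
    linarith
  -- 2,1
  · obtain ⟨c, hcA, hlb, hIoi, _⟩ := h
    have hcy : c < y' := lt_of_le_of_ne (hlb y' h'.1) (fun e => hcA (e ▸ h'.1))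
    have : (c + y')/2 ∈ A := hIoi _ (by linarith)
    have := h'.2 _ this
    linarith
  -- 2,2
  · obtain ⟨c, hcA, hlb, hIoi, hy⟩ := h
    obtain ⟨c', hcA', hlb', hIoi', hy'⟩ := h'
    have hcc : c = c' := by
      rcases lt_trichotomy c c' with hlt | he | hgt
      · have : (c + c')/2 ∈ A := hIoi _ (by linarith)
        have := hlb' _ this
        linarith
      · exact he
      · have : (c' + c)/2 ∈ A := hIoi' _ (by linarith)
        have := hlb _ this
        linarith
    rw [hy, hy', hcc]
  -- 2,3
  · obtain ⟨c, hcA, hlb, hIoi, hy⟩ := h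
    obtain ⟨c', d', hcA', hlb', hcd', hIoo', hgap', hy'⟩ := h'
    have hcc : c = c' := by
      rcases lt_trichotomy c c' with hlt | he | hgt
      · have : (c + c')/2 ∈ A := hIoi _ (by linarith)
        have := hlb' _ this
        linarith
      · exact he
      · set t := min ((c' + c)/2) ((c' + d')/2) with ht
        have h1 : c' < t := lt_min (by linarith) (by linarith)
        have h2 : t < d' := lt_of_le_of_lt (min_le_right _ _) (by linarith)
        have h3 : t < c := lt_of_le_of_lt (min_le_left _ _) (by linarith)
        have := hlb _ (hIoo' t h1 h2)
        linarith
    exfalso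
    obtain ⟨t, h1, _, h3⟩ := hgap' (d' + 1) (by linarith)
    exact h3 (hIoi t (by rw [hcc]; exact h1))
  -- 2,4
  · obtain ⟨c, hcA, _, _, _⟩ := h
    exact absurd (h'.1 c) hcA
  -- 2,5
  · obtain ⟨c, hcA, hlb, _, _⟩ := h
    obtain ⟨d, hIio', _, _⟩ := h'
    have : min c d - 1 ∈ A := hIio' _ (by have := min_le_right c d; linarith)
    have := hlb _ this
    have := min_le_left c d
    linarith
  -- 3,1
  · obtain ⟨c, d, hcA, hlb, hcd, hIoo, _, _⟩ := h
    have hcy : c < y' := lt_of_le_of_ne (hlb y' h'.1) (fun e => hcA (e ▸ h'.1))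
    set t := min ((c + y')/2) ((c + d)/2) with ht
    have h1 : c < t := lt_min (by linarith) (by linarith)
    have h2 : t < d := lt_of_le_of_lt (min_le_right _ _) (by linarith)
    have h3 : t < y' := lt_of_le_of_lt (min_le_left _ _) (by linarith)
    have := h'.2 t (hIoo t h1 h2)
    linarith
  -- 3,2
  · obtain ⟨c, d, hcA, hlb, hcd, hIoo, hgap, hy⟩ := h
    obtain ⟨c', hcA', hlb', hIoi', hy'⟩ := h'
    have hcc : c' = c := by
      rcases lt_trichotomy c' c with hlt | he | hgt
      · have : (c' + c)/2 ∈ A := hIoi' _ (by linarith)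
        have := hlb _ this
        linarith
      · exact he
      · set t := min ((c + c')/2) ((c + d)/2) with ht
        have h1 : c < t := lt_min (by linarith) (by linarith)
        have h2 : t < d := lt_of_le_of_lt (min_le_right _ _) (by linarith)
        have h3 : t < c' := lt_of_le_of_lt (min_le_left _ _) (by linarith)
        have := hlb' _ (hIoo t h1 h2)
        linarith
    exfalso
    obtain ⟨t, h1, _, h3⟩ := hgap (d + 1) (by linarith)
    exact h3 (hIoi' t (by rw [hcc]; exact h1))
  -- 3,3
  · obtain ⟨c, d, hcA, hlb, hcd, hIoo, hgap, hy⟩ := h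
    obtain ⟨c', d', hcA', hlb', hcd', hIoo', hgap', hy'⟩ := h'
    have hcc : c = c' := by
      rcases lt_trichotomy c c' with hlt | he | hgt
      · set t := min ((c + c')/2) ((c + d)/2) with ht
        have h1 : c < t := lt_min (by linarith) (by linarith)
        have h2 : t < d := lt_of_le_of_lt (min_le_right _ _) (by linarith)
        have h3 : t < c' := lt_of_le_of_lt (min_le_left _ _) (by linarith)
        have := hlb' _ (hIoo t h1 h2)
        linarith
      · exact he
      · set t := min ((c' + c)/2) ((c' + d')/2) with ht
        have h1 : c' < t := lt_min (by linarith) (by linarith)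
        have h2 : t < d' := lt_of_le_of_lt (min_le_right _ _) (by linarith)
        have h3 : t < c := lt_of_le_of_lt (min_le_left _ _) (by linarith)
        have := hlb _ (hIoo' t h1 h2)
        linarith
    have hdd : d = d' := by
      rcases lt_trichotomy d d' with hlt | he | hgt
      · obtain ⟨t, h1, h2, h3⟩ := hgap d' hlt
        exact absurd (hIoo' t (by rw [← hcc]; exact h1) h2) h3
      · exact he
      · obtain ⟨t, h1, h2, h3⟩ := hgap' d hgt
        exact absurd (hIoo t (by rw [hcc]; exact h1) h2) h3
    linarith [hy, hy', hcc, hdd]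
  -- 3,4
  · obtain ⟨c, _, hcA, _⟩ := h
    exact absurd (h'.1 c) hcA
  -- 3,5
  · obtain ⟨c, d, hcA, hlb, _, _, _, _⟩ := h
    obtain ⟨d', hIio', _, _⟩ := h'
    have : min c d' - 1 ∈ A := hIio' _ (by have := min_le_right c d'; linarith)
    have := hlb _ this
    have := min_le_left c d'
    linarith
  -- 4,1
  · have : y' - 1 ∈ A := h.1 _
    have := h'.2 _ this
    linarith
  -- 4,2
  · obtain ⟨c, hcA, _, _, _⟩ := h'
    exact absurd (h.1 c) hcA
  -- 4,3
  · obtain ⟨c, _, hcA, _⟩ := h'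
    exact absurd (h.1 c) hcA
  -- 4,4
  · rw [h.2, h'.2]
  -- 4,5
  · obtain ⟨d, _, hgap', _⟩ := h'
    obtain ⟨t, _, h3⟩ := hgap' (d + 1) (by linarith)
    exact absurd (h.1 t) h3
  -- 5,1
  · obtain ⟨d, hIio, _, _⟩ := h
    have : min y' d - 1 ∈ A := hIio _ (by have := min_le_right y' d; linarith)
    have := h'.2 _ this
    have := min_le_left y' d
    linarith
  -- 5,2
  · obtain ⟨c, hcA, hlb, _, _⟩ := h'
    obtain ⟨d, hIio, _, _⟩ := h
    have : min c d - 1 ∈ A := hIio _ (by have := min_le_right c d; linarith)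
    have := hlb _ this
    have := min_le_left c d
    linarith
  -- 5,3
  · obtain ⟨c, d', hcA, hlb, _, _, _, _⟩ := h'
    obtain ⟨d, hIio, _, _⟩ := h
    have : min c d - 1 ∈ A := hIio _ (by have := min_le_right c d; linarith)
    have := hlb _ this
    have := min_le_left c d
    linarith
  -- 5,4
  · obtain ⟨d, _, hgap, _⟩ := h
    obtain ⟨t, _, h3⟩ := hgap (d + 1) (by linarith)
    exact absurd (h'.1 t) h3
  -- 5,5
  · obtain ⟨d, hIio, hgap, hy⟩ := h
    obtain ⟨d', hIio', hgap', hy'⟩ := h'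
    have hdd : d = d' := by
      rcases lt_trichotomy d d' with hlt | he | hgt
      · obtain ⟨t, h1, h3⟩ := hgap d' hlt
        exact absurd (hIio' t h1) h3
      · exact he
      · obtain ⟨t, h1, h3⟩ := hgap' d hgt
        exact absurd (hIio t h1) h3
    linarith

open Classical in
noncomputable def pick (A : Set ℝ) : ℝ :=
  if h : ∃ y, Phi A y then h.choose else 0

theorem pick_Phi {A : Set ℝ} (h : ∃ y, Phi A y) : Phi A (pick A) := by
  classical
  rw [pick]
  rw [dif_pos h]
  exact h.choose_spec

theorem Phi_iff_pick {A : Set ℝ} (h : ∃ y, Phi A y) (y : ℝ) :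
    Phi A y ↔ y = pick A :=
  ⟨fun hy => Phi_unique hy (pick_Phi h), fun e => e ▸ pick_Phi h⟩

theorem pick_mem {A : Set ℝ} (h : ∃ y, Phi A y) : pick A ∈ A :=
  Phi_mem (pick_Phi h)

end DefChoice

namespace DefChoice

/-- Key o-minimality consequence: just right of the (unattained) infimum, A contains
an interval. -/
theorem exists_Ioo_subset {A : Set ℝ} (T : Finset (Set ℝ))
    (hT : ∀ I ∈ T, IsOpenIntervalOrPoint I) (hA : A = ⋃ I ∈ T, I)
    (hne : A.Nonempty) (hbdd : BddBelow A) (hcA : sInf A ∉ A) :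
    ∃ d, sInf A < d ∧ Set.Ioo (sInf A) d ⊆ A := by
  set c := sInf A with hc
  have happrox : ∀ ε > (0:ℝ), ∃ t, t ∈ A ∧ c < t ∧ t < c + ε := by
    intro ε hε
    obtain ⟨t, htA, htlt⟩ := exists_lt_of_csInf_lt hne (show c < c + ε by linarith)
    exact ⟨t, htA, lt_of_le_of_ne (csInf_le hbdd htA) (fun e => hcA (e ▸ htA)), htlt⟩
  have hfn : ∀ n : ℕ, ∃ t, t ∈ A ∧ c < t ∧ t < c + 1/(n+1) :=
    fun n => happrox _ (by positivity)
  choose f hfA hfc hfu using hfn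
  have hpc : ∀ n, ∃ I : {I // I ∈ T}, f n ∈ I.1 := by
    intro n
    have := hfA n
    rw [hA] at this
    simp only [Set.mem_iUnion, exists_prop] at this
    obtain ⟨I, hIT, hfI⟩ := this
    exact ⟨⟨I, hIT⟩, hfI⟩
  choose g hg using hpc
  obtain ⟨I0, hI0⟩ := Finite.exists_infinite_fiber g
  have hKinf : (g ⁻¹' {I0} : Set ℕ).Infinite := by
    rwa [Set.infinite_coe_iff] at hI0
  have key : ∀ ε > (0:ℝ), ∃ t, t ∈ I0.1 ∧ c < t ∧ t < c + ε := by
    intro ε hε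
    obtain ⟨N, hN⟩ := exists_nat_gt (1/ε)
    obtain ⟨nn, hnn, hnN⟩ := hKinf.exists_gt N
    have hgnn : g nn = I0 := hnn
    have hNn : (1:ℝ)/ε < (nn:ℝ) + 1 := by
      refine lt_trans hN ?_
      have : (N : ℝ) < (nn : ℝ) := by exact_mod_cast hnN
      linarith
    have h1 : (1:ℝ)/(nn+1) < ε := by
      rw [div_lt_iff₀ (by positivity : (0:ℝ) < (nn:ℝ)+1)]
      have h2 := mul_lt_mul_of_pos_left hNn hε
      rwa [mul_one_div, div_self hε.ne'] at h2
    refine ⟨f nn, ?_, hfc nn, ?_⟩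
    · rw [← hgnn]; exact hg nn
    · have := hfu nn
      linarith
  have hIsub : I0.1 ⊆ A := by
    rw [hA]
    exact fun t ht => Set.mem_biUnion I0.2 ht
  rcases hT I0.1 I0.2 with ⟨a, b, hI⟩ | ⟨a, hI⟩ | ⟨b, hI⟩ | hI | ⟨a, hI⟩
  · -- Ioo a b
    obtain ⟨t₀, ht₀I, ht₀c, _⟩ := key 1 one_pos
    rw [hI] at ht₀I hIsub
    have hb : c < b := lt_trans ht₀c ht₀I.2
    have hac : a ≤ c := by
      by_contra hcon
      push_neg at hcon
      obtain ⟨t, htI, htc, htu⟩ := key (a - c) (by linarith)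
      rw [hI] at htI
      linarith [htI.1]
    have hca : ¬ a < c := by
      intro hcon
      exact hcA (hIsub ⟨hcon, hb⟩)
    have hac' : a = c := le_antisymm hac (not_lt.1 hca)
    exact ⟨b, hb, by rw [← hac']; exact hIsub⟩
  · -- Ioi a
    obtain ⟨t₀, ht₀I, ht₀c, _⟩ := key 1 one_pos
    rw [hI] at ht₀I hIsub
    have hac : a ≤ c := by
      by_contra hcon
      push_neg at hcon
      obtain ⟨t, htI, htc, htu⟩ := key (a - c) (by linarith)
      rw [hI] at htI
      have : a < t := htI
      linarith
    have hca : ¬ a < c := by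
      intro hcon
      exact hcA (hIsub hcon)
    have hac' : a = c := le_antisymm hac (not_lt.1 hca)
    refine ⟨c + 1, by linarith, fun t ht => hIsub ?_⟩
    rw [hac']
    exact ht.1
  · -- Iio b
    exfalso
    obtain ⟨t₀, ht₀I, ht₀c, _⟩ := key 1 one_pos
    rw [hI] at ht₀I hIsub
    have hb : c < b := lt_trans ht₀c ht₀I
    have : c - 1 ∈ A := hIsub (show c - 1 < b by linarith)
    have := csInf_le hbdd this
    linarith
  · -- univ
    exfalso
    rw [hI] at hIsub
    have : c - 1 ∈ A := hIsub (Set.mem_univ _)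
    have := csInf_le hbdd this
    linarith
  · -- {a}
    exfalso
    obtain ⟨t₀, ht₀I, ht₀c, _⟩ := key 1 one_pos
    rw [hI] at ht₀I
    have ht₀a : t₀ = a := ht₀I
    obtain ⟨t, htI, htc, htu⟩ := key (a - c) (by rw [← ht₀a]; linarith)
    rw [hI] at htI
    have hta : t = a := htI
    rw [hta] at htu
    linarith

theorem exists_Iio_subset {A : Set ℝ} (T : Finset (Set ℝ))
    (hT : ∀ I ∈ T, IsOpenIntervalOrPoint I) (hA : A = ⋃ I ∈ T, I)
    (hunbdd : ¬ BddBelow A) : ∃ b, Set.Iio b ⊆ A := by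
  by_contra hno
  push_neg at hno
  apply hunbdd
  have hIb : ∀ I ∈ T, BddBelow I := by
    intro I hIT
    have hIsub : I ⊆ A := by
      rw [hA]; exact fun t ht => Set.mem_biUnion hIT ht
    rcases hT I hIT with ⟨a, b, hI⟩ | ⟨a, hI⟩ | ⟨b, hI⟩ | hI | ⟨a, hI⟩
    · rw [hI]; exact bddBelow_Ioo
    · rw [hI]; exact bddBelow_Ioi
    · exfalso
      obtain ⟨t, ht1, ht2⟩ := Set.not_subset.1 (hno b)
      exact ht2 (hIsub (by rw [hI]; exact ht1))
    · exfalso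
      obtain ⟨t, ht1, ht2⟩ := Set.not_subset.1 (hno 0)
      exact ht2 (hIsub (by rw [hI]; trivial))
    · rw [hI]; exact bddBelow_singleton
  classical
  have hbd : ∀ (s : Finset (Set ℝ)), (∀ I ∈ s, BddBelow I) → BddBelow (⋃ I ∈ s, I) := by
    intro s
    induction s using Finset.induction_on with
    | empty => intro _; simp
    | insert _ _ hJs ih =>
      intro hmem
      rw [Finset.set_biUnion_insert]
      exact BddBelow.union (hmem _ (Finset.mem_insert_self _ _))
        (ih fun I hI => hmem I (Finset.mem_insert_of_mem hI))
  rw [hA]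
  exact hbd T hIb

theorem Phi_exists {A : Set ℝ} (T : Finset (Set ℝ))
    (hT : ∀ I ∈ T, IsOpenIntervalOrPoint I) (hA : A = ⋃ I ∈ T, I)
    (hne : A.Nonempty) : ∃ y, Phi A y := by
  by_cases hmin : ∃ y, y ∈ A ∧ ∀ t ∈ A, y ≤ t
  · obtain ⟨y, hy⟩ := hmin
    exact ⟨y, Or.inl hy⟩
  by_cases hbdd : BddBelow A
  · set c := sInf A with hc
    have hlb : ∀ t ∈ A, c ≤ t := fun t ht => csInf_le hbdd ht
    have hcA : c ∉ A := fun h => hmin ⟨c, h, hlb⟩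
    obtain ⟨d₀, hd₀c, hd₀sub⟩ := exists_Ioo_subset T hT hA hne hbdd hcA
    by_cases hIoi : ∀ t, c < t → t ∈ A
    · exact ⟨c + 1, Or.inr (Or.inl ⟨c, hcA, hlb, hIoi, rfl⟩)⟩
    · push_neg at hIoi
      obtain ⟨u, hcu, huA⟩ := hIoi
      set S := {t : ℝ | c < t ∧ Set.Ioo c t ⊆ A} with hS
      have hSne : S.Nonempty := ⟨d₀, hd₀c, hd₀sub⟩
      have hSbdd : BddAbove S := by
        refine ⟨u, fun t ht => ?_⟩
        by_contra hcon
        push_neg at hcon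
        exact huA (ht.2 ⟨hcu, hcon⟩)
      set D := sSup S with hD
      have hcD : c < D :=
        lt_of_lt_of_le hd₀c (le_csSup hSbdd (show d₀ ∈ S from ⟨hd₀c, hd₀sub⟩))
      refine ⟨(c + D)/2, Or.inr (Or.inr (Or.inl ⟨c, D, hcA, hlb, hcD, ?_, ?_, by ring⟩))⟩
      · intro t hct htD
        obtain ⟨s, hsS, hts⟩ := exists_lt_of_lt_csSup hSne htD
        exact hsS.2 ⟨hct, hts⟩
      · intro e hDe
        by_contra hcon
        push_neg at hcon
        have heS : e ∈ S := ⟨lt_trans hcD hDe, fun t ht => hcon t ht.1 ht.2⟩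
        have := le_csSup hSbdd heS
        linarith
  · obtain ⟨b₀, hb₀⟩ := exists_Iio_subset T hT hA hbdd
    by_cases huniv : ∀ t : ℝ, t ∈ A
    · exact ⟨0, Or.inr (Or.inr (Or.inr (Or.inl ⟨huniv, rfl⟩)))⟩
    · push_neg at huniv
      obtain ⟨u, huA⟩ := huniv
      set S := {t : ℝ | Set.Iio t ⊆ A} with hS
      have hSne : S.Nonempty := ⟨b₀, hb₀⟩
      have hSbdd : BddAbove S := by
        refine ⟨u, fun t ht => ?_⟩
        by_contra hcon
        push_neg at hcon
        exact huA (ht hcon)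
      set D := sSup S with hD
      refine ⟨D - 1, Or.inr (Or.inr (Or.inr (Or.inr ⟨D, ?_, ?_, by ring⟩)))⟩
      · intro t htD
        obtain ⟨s, hsS, hts⟩ := exists_lt_of_lt_csSup hSne htD
        exact hsS hts
      · intro e hDe
        by_contra hcon
        push_neg at hcon
        have heS : e ∈ S := fun t ht => hcon t ht
        have := le_csSup hSbdd heS
        linarith

end DefChoice

namespace DefChoice

variable (R : OminimalStructure)

theorem phi1_set {M : ℕ} {X : Set (Fin (M + 1) → ℝ)} (hX : X ∈ R.sets (M + 1)) :
    {w : Fin (M + 1) → ℝ |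
      phi1 {t : ℝ | Fin.snoc (fun i : Fin M => w i.castSucc) t ∈ X} (w (Fin.last M))}
      ∈ R.sets (M + 1) :=
  R.toRealStructure.setOf_and
    (R.toRealStructure.fib_atom hX (fun i => i.castSucc) (Fin.last M))
    (R.toRealStructure.allS
      (fun w t => Fin.snoc (fun i : Fin M => w i.castSucc) t ∈ X → w (Fin.last M) ≤ t)
      (R.toRealStructure.setOf_imp
        (R.toRealStructure.fib_atom hX (Fin.castLE (by omega)) (⟨M + 1, by omega⟩ : Fin (M + 2)))
        (R.le_set (⟨M, by omega⟩ : Fin (M + 2)) ⟨M + 1, by omega⟩)))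

theorem phi4_set {M : ℕ} {X : Set (Fin (M + 1) → ℝ)} (hX : X ∈ R.sets (M + 1)) :
    {w : Fin (M + 1) → ℝ |
      phi4 {t : ℝ | Fin.snoc (fun i : Fin M => w i.castSucc) t ∈ X} (w (Fin.last M))}
      ∈ R.sets (M + 1) :=
  R.toRealStructure.setOf_and
    (R.toRealStructure.allS
      (fun w t => Fin.snoc (fun i : Fin M => w i.castSucc) t ∈ X)
      (R.toRealStructure.fib_atom hX (Fin.castLE (by omega)) (⟨M + 1, by omega⟩ : Fin (M + 2))))
    (R.const_set (⟨M, by omega⟩ : Fin (M + 1)) 0)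

theorem phi2_set {M : ℕ} {X : Set (Fin (M + 1) → ℝ)} (hX : X ∈ R.sets (M + 1)) :
    {w : Fin (M + 1) → ℝ |
      phi2 {t : ℝ | Fin.snoc (fun i : Fin M => w i.castSucc) t ∈ X} (w (Fin.last M))}
      ∈ R.sets (M + 1) := by
  refine R.toRealStructure.exS
    (fun w c => c ∉ {t : ℝ | Fin.snoc (fun i : Fin M => w i.castSucc) t ∈ X} ∧
      (∀ t ∈ {t : ℝ | Fin.snoc (fun i : Fin M => w i.castSucc) t ∈ X}, c ≤ t) ∧
      (∀ t, c < t → t ∈ {t : ℝ | Fin.snoc (fun i : Fin M => w i.castSucc) t ∈ X}) ∧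
      w (Fin.last M) = c + 1) ?_
  beta_reduce
  refine R.toRealStructure.setOf_and ?_
    (R.toRealStructure.setOf_and ?_ (R.toRealStructure.setOf_and ?_ ?_))
  · refine R.toRealStructure.setOf_compl _ ?_
    exact R.toRealStructure.fib_atom hX (Fin.castLE (by omega)) (⟨M + 1, by omega⟩ : Fin (M + 2))
  · refine R.toRealStructure.allS
      (fun (x : Fin (M + 2) → ℝ) t =>
        Fin.snoc (fun i : Fin M => x (Fin.castLE (by omega) i)) t ∈ X →
          x ⟨M + 1, by omega⟩ ≤ t) ?_
    beta_reduce
    refine R.toRealStructure.setOf_imp ?_ ?_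
    · exact R.toRealStructure.fib_atom hX (Fin.castLE (by omega)) (⟨M + 2, by omega⟩ : Fin (M + 3))
    · exact R.le_set (⟨M + 1, by omega⟩ : Fin (M + 3)) ⟨M + 2, by omega⟩
  · refine R.toRealStructure.allS
      (fun (x : Fin (M + 2) → ℝ) t => x ⟨M + 1, by omega⟩ < t →
        Fin.snoc (fun i : Fin M => x (Fin.castLE (by omega) i)) t ∈ X) ?_
    beta_reduce
    refine R.toRealStructure.setOf_imp ?_ ?_
    · exact R.lt_set (⟨M + 1, by omega⟩ : Fin (M + 3)) ⟨M + 2, by omega⟩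
    · exact R.toRealStructure.fib_atom hX (Fin.castLE (by omega)) (⟨M + 2, by omega⟩ : Fin (M + 3))
  · exact R.add_const_set (⟨M, by omega⟩ : Fin (M + 2)) ⟨M + 1, by omega⟩ 1

theorem phi5_set {M : ℕ} {X : Set (Fin (M + 1) → ℝ)} (hX : X ∈ R.sets (M + 1)) :
    {w : Fin (M + 1) → ℝ |
      phi5 {t : ℝ | Fin.snoc (fun i : Fin M => w i.castSucc) t ∈ X} (w (Fin.last M))}
      ∈ R.sets (M + 1) := by
  refine R.toRealStructure.exS
    (fun w d => (∀ t, t < d → t ∈ {t : ℝ | Fin.snoc (fun i : Fin M => w i.castSucc) t ∈ X}) ∧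
      (∀ e, d < e → ∃ t, t < e ∧
        t ∉ {t : ℝ | Fin.snoc (fun i : Fin M => w i.castSucc) t ∈ X}) ∧
      d = w (Fin.last M) + 1) ?_
  beta_reduce
  refine R.toRealStructure.setOf_and ?_ (R.toRealStructure.setOf_and ?_ ?_)
  · refine R.toRealStructure.allS
      (fun (x : Fin (M + 2) → ℝ) t => t < x ⟨M + 1, by omega⟩ →
        Fin.snoc (fun i : Fin M => x (Fin.castLE (by omega) i)) t ∈ X) ?_
    beta_reduce
    refine R.toRealStructure.setOf_imp ?_ ?_
    · exact R.lt_set (⟨M + 2, by omega⟩ : Fin (M + 3)) ⟨M + 1, by omega⟩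
    · exact R.toRealStructure.fib_atom hX (Fin.castLE (by omega)) (⟨M + 2, by omega⟩ : Fin (M + 3))
  · refine R.toRealStructure.allS
      (fun (x : Fin (M + 2) → ℝ) e => x ⟨M + 1, by omega⟩ < e → ∃ t, t < e ∧
        Fin.snoc (fun i : Fin M => x (Fin.castLE (by omega) i)) t ∉ X) ?_
    beta_reduce
    refine R.toRealStructure.setOf_imp ?_ ?_
    · exact R.lt_set (⟨M + 1, by omega⟩ : Fin (M + 3)) ⟨M + 2, by omega⟩
    · refine R.toRealStructure.exS
        (fun (x : Fin (M + 3) → ℝ) t => t < x ⟨M + 2, by omega⟩ ∧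
          Fin.snoc (fun i : Fin M => x (Fin.castLE (by omega) i)) t ∉ X) ?_
      beta_reduce
      refine R.toRealStructure.setOf_and ?_ ?_
      · exact R.lt_set (⟨M + 3, by omega⟩ : Fin (M + 4)) ⟨M + 2, by omega⟩
      · refine R.toRealStructure.setOf_compl _ ?_
        exact R.toRealStructure.fib_atom hX (Fin.castLE (by omega)) (⟨M + 3, by omega⟩ : Fin (M + 4))
  · exact R.add_const_set (⟨M + 1, by omega⟩ : Fin (M + 2)) ⟨M, by omega⟩ 1

theorem phi3_set {M : ℕ} {X : Set (Fin (M + 1) → ℝ)} (hX : X ∈ R.sets (M + 1)) :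
    {w : Fin (M + 1) → ℝ |
      phi3 {t : ℝ | Fin.snoc (fun i : Fin M => w i.castSucc) t ∈ X} (w (Fin.last M))}
      ∈ R.sets (M + 1) := by
  refine R.toRealStructure.exS
    (fun w c => ∃ d, c ∉ {t : ℝ | Fin.snoc (fun i : Fin M => w i.castSucc) t ∈ X} ∧
      (∀ t ∈ {t : ℝ | Fin.snoc (fun i : Fin M => w i.castSucc) t ∈ X}, c ≤ t) ∧
      c < d ∧
      (∀ t, c < t → t < d → t ∈ {t : ℝ | Fin.snoc (fun i : Fin M => w i.castSucc) t ∈ X}) ∧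
      (∀ e, d < e → ∃ t, c < t ∧ t < e ∧
        t ∉ {t : ℝ | Fin.snoc (fun i : Fin M => w i.castSucc) t ∈ X}) ∧
      w (Fin.last M) + w (Fin.last M) = c + d) ?_
  beta_reduce
  refine R.toRealStructure.exS
    (fun (x : Fin (M + 2) → ℝ) d =>
      x ⟨M + 1, by omega⟩ ∉
        {t : ℝ | Fin.snoc (fun i : Fin M => x (Fin.castLE (by omega) i)) t ∈ X} ∧
      (∀ t ∈ {t : ℝ | Fin.snoc (fun i : Fin M => x (Fin.castLE (by omega) i)) t ∈ X},
        x ⟨M + 1, by omega⟩ ≤ t) ∧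
      x ⟨M + 1, by omega⟩ < d ∧
      (∀ t, x ⟨M + 1, by omega⟩ < t → t < d →
        t ∈ {t : ℝ | Fin.snoc (fun i : Fin M => x (Fin.castLE (by omega) i)) t ∈ X}) ∧
      (∀ e, d < e → ∃ t, x ⟨M + 1, by omega⟩ < t ∧ t < e ∧
        t ∉ {t : ℝ | Fin.snoc (fun i : Fin M => x (Fin.castLE (by omega) i)) t ∈ X}) ∧
      x ⟨M, by omega⟩ + x ⟨M, by omega⟩ = x ⟨M + 1, by omega⟩ + d) ?_
  beta_reduce
  refine R.toRealStructure.setOf_and ?_ (R.toRealStructure.setOf_and ?_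
    (R.toRealStructure.setOf_and ?_ (R.toRealStructure.setOf_and ?_
      (R.toRealStructure.setOf_and ?_ ?_))))
  · refine R.toRealStructure.setOf_compl _ ?_
    exact R.toRealStructure.fib_atom hX (Fin.castLE (by omega)) (⟨M + 1, by omega⟩ : Fin (M + 3))
  · refine R.toRealStructure.allS
      (fun (x : Fin (M + 3) → ℝ) t =>
        Fin.snoc (fun i : Fin M => x (Fin.castLE (by omega) i)) t ∈ X →
          x ⟨M + 1, by omega⟩ ≤ t) ?_
    beta_reduce
    refine R.toRealStructure.setOf_imp ?_ ?_
    · exact R.toRealStructure.fib_atom hX (Fin.castLE (by omega)) (⟨M + 3, by omega⟩ : Fin (M + 4))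
    · exact R.le_set (⟨M + 1, by omega⟩ : Fin (M + 4)) ⟨M + 3, by omega⟩
  · exact R.lt_set (⟨M + 1, by omega⟩ : Fin (M + 3)) ⟨M + 2, by omega⟩
  · refine R.toRealStructure.allS
      (fun (x : Fin (M + 3) → ℝ) t => x ⟨M + 1, by omega⟩ < t → t < x ⟨M + 2, by omega⟩ →
        Fin.snoc (fun i : Fin M => x (Fin.castLE (by omega) i)) t ∈ X) ?_
    beta_reduce
    refine R.toRealStructure.setOf_imp ?_ (R.toRealStructure.setOf_imp ?_ ?_)
    · exact R.lt_set (⟨M + 1, by omega⟩ : Fin (M + 4)) ⟨M + 3, by omega⟩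
    · exact R.lt_set (⟨M + 3, by omega⟩ : Fin (M + 4)) ⟨M + 2, by omega⟩
    · exact R.toRealStructure.fib_atom hX (Fin.castLE (by omega)) (⟨M + 3, by omega⟩ : Fin (M + 4))
  · refine R.toRealStructure.allS
      (fun (x : Fin (M + 3) → ℝ) e => x ⟨M + 2, by omega⟩ < e → ∃ t,
        x ⟨M + 1, by omega⟩ < t ∧ t < e ∧
        Fin.snoc (fun i : Fin M => x (Fin.castLE (by omega) i)) t ∉ X) ?_
    beta_reduce
    refine R.toRealStructure.setOf_imp ?_ ?_
    · exact R.lt_set (⟨M + 2, by omega⟩ : Fin (M + 4)) ⟨M + 3, by omega⟩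
    · refine R.toRealStructure.exS
        (fun (x : Fin (M + 4) → ℝ) t => x ⟨M + 1, by omega⟩ < t ∧ t < x ⟨M + 3, by omega⟩ ∧
          Fin.snoc (fun i : Fin M => x (Fin.castLE (by omega) i)) t ∉ X) ?_
      beta_reduce
      refine R.toRealStructure.setOf_and ?_ (R.toRealStructure.setOf_and ?_ ?_)
      · exact R.lt_set (⟨M + 1, by omega⟩ : Fin (M + 5)) ⟨M + 4, by omega⟩
      · exact R.lt_set (⟨M + 4, by omega⟩ : Fin (M + 5)) ⟨M + 3, by omega⟩
      · refine R.toRealStructure.setOf_compl _ ?_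
        exact R.toRealStructure.fib_atom hX (Fin.castLE (by omega)) (⟨M + 4, by omega⟩ : Fin (M + 5))
  · exact R.add_eq_add_set (⟨M, by omega⟩ : Fin (M + 3)) ⟨M, by omega⟩
      ⟨M + 1, by omega⟩ ⟨M + 2, by omega⟩

theorem Phi_set {M : ℕ} {X : Set (Fin (M + 1) → ℝ)} (hX : X ∈ R.sets (M + 1)) :
    {w : Fin (M + 1) → ℝ |
      Phi {t : ℝ | Fin.snoc (fun i : Fin M => w i.castSucc) t ∈ X} (w (Fin.last M))}
      ∈ R.sets (M + 1) :=
  R.toRealStructure.setOf_or (phi1_set R hX)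
    (R.toRealStructure.setOf_or (phi2_set R hX)
      (R.toRealStructure.setOf_or (phi3_set R hX)
        (R.toRealStructure.setOf_or (phi4_set R hX) (phi5_set R hX))))

end DefChoice

theorem fib_structured (R : OminimalStructure) {M : ℕ} {X : Set (Fin (M + 1) → ℝ)}
    (hX : X ∈ R.sets (M + 1)) (c : Fin M → ℝ) :
    ∃ T : Finset (Set ℝ), (∀ I ∈ T, IsOpenIntervalOrPoint I) ∧
      {t : ℝ | Fin.snoc c t ∈ X} = ⋃ I ∈ T, I := by
  obtain ⟨T, hT, hEq⟩ := (R.omin _).1 (R.fiber_mem hX c)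
  refine ⟨T, hT, ?_⟩
  ext t
  have h2 := Set.ext_iff.1 hEq (fun _ : Fin 1 => t)
  simpa using h2


open DefChoice

/-- Definable Choice: for a definable X ⊆ ℝ^{m+n} there is a definable selection
ρ : π_m(X) → ℝ^n of the fibers of X, depending only on the fiber. -/
theorem definable_choice (R : OminimalStructure) (m n : ℕ) (X : Set (Fin (m + n) → ℝ))
    (hX : X ∈ R.sets (m + n)) :
    ∃ ρ : (Fin m → ℝ) → (Fin n → ℝ),
      -- the graph of ρ restricted to π_m(X) is definable
      {z : Fin (m + n) → ℝ |
          (fun i : Fin m => z (Fin.castAdd n i)) ∈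
            (fun (x : Fin (m + n) → ℝ) (i : Fin m) => x (Fin.castAdd n i)) '' X ∧
          (fun i : Fin n => z (Fin.natAdd m i)) =
            ρ (fun i : Fin m => z (Fin.castAdd n i))} ∈ R.sets (m + n) ∧
      -- (1) ρ(a) ∈ X_a for every a ∈ π_m(X)
      (∀ a ∈ (fun (x : Fin (m + n) → ℝ) (i : Fin m) => x (Fin.castAdd n i)) '' X,
        Fin.append a (ρ a) ∈ X) ∧
      -- (2) ρ depends only on the fiber
      (∀ a ∈ (fun (x : Fin (m + n) → ℝ) (i : Fin m) => x (Fin.castAdd n i)) '' X,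
        ∀ a' ∈ (fun (x : Fin (m + n) → ℝ) (i : Fin m) => x (Fin.castAdd n i)) '' X,
          {b : Fin n → ℝ | Fin.append a b ∈ X} = {b : Fin n → ℝ | Fin.append a' b ∈ X} →
            ρ a = ρ a') := by
  induction n with
  | zero =>
    refine ⟨fun _ => Fin.elim0, ?_, ?_, ?_⟩
    · have e : {z : Fin (m + 0) → ℝ |
          (fun i : Fin m => z (Fin.castAdd 0 i)) ∈
            (fun (x : Fin (m + 0) → ℝ) (i : Fin m) => x (Fin.castAdd 0 i)) '' X ∧
          (fun i : Fin 0 => z (Fin.natAdd m i)) =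
            (fun _ : Fin m → ℝ => (Fin.elim0 : Fin 0 → ℝ))
              (fun i : Fin m => z (Fin.castAdd 0 i))} = X := by
        ext z
        simp only [Set.mem_setOf_eq, Set.mem_image]
        constructor
        · rintro ⟨⟨x, hx, he⟩, -⟩
          have hxz : x = z := he
          rwa [← hxz]
        · intro hz
          exact ⟨⟨z, hz, rfl⟩, funext fun i => i.elim0⟩
      exact R.toRealStructure.congr_mem hX e
    · rintro a ⟨x, hx, he⟩
      have hxa : x = a := he
      have happ : Fin.append a (Fin.elim0 : Fin 0 → ℝ) = a := by
        funext i
        refine Fin.addCases (fun j => ?_) (fun j => j.elim0) i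
        rw [Fin.append_left]
        exact congrArg a (Fin.ext rfl)
      show Fin.append a (Fin.elim0 : Fin 0 → ℝ) ∈ X
      rw [happ, ← hxa]
      exact hx
    · intro a _ a' _ _
      rfl
  | succ n ih =>
    have hY : (fun (x : Fin ((m + n) + 1) → ℝ) (i : Fin (m + n)) => x i.castSucc) '' X
        ∈ R.sets (m + n) := R.toRealStructure.proj_mem (m + n) X hX
    set Y := (fun (x : Fin ((m + n) + 1) → ℝ) (i : Fin (m + n)) => x i.castSucc) '' X with hYdef
    obtain ⟨ρ₁, hG₁, hmem₁, hfib₁⟩ := ih Y hY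
    have K1 : (fun (x : Fin (m + (n + 1)) → ℝ) (i : Fin m) => x (Fin.castAdd (n + 1) i)) '' X
        = (fun (x : Fin (m + n) → ℝ) (i : Fin m) => x (Fin.castAdd n i)) '' Y := by
      ext a
      constructor
      · rintro ⟨x, hx, rfl⟩
        refine ⟨fun i => x i.castSucc, ⟨x, hx, rfl⟩, ?_⟩
        funext i
        exact congrArg x (Fin.ext rfl)
      · rintro ⟨y, ⟨x, hx, rfl⟩, rfl⟩
        exact ⟨x, hx, funext fun i => congrArg x (Fin.ext rfl)⟩
    have K2 : ∀ a, a ∈ (fun (x : Fin (m + (n + 1)) → ℝ) (i : Fin m) =>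
          x (Fin.castAdd (n + 1) i)) '' X →
        {t : ℝ | Fin.snoc (Fin.append a (ρ₁ a)) t ∈ X}.Nonempty := by
      intro a ha
      have ha' : a ∈ (fun (x : Fin (m + n) → ℝ) (i : Fin m) => x (Fin.castAdd n i)) '' Y := by
        rw [← K1]; exact ha
      obtain ⟨x, hx, he⟩ := hmem₁ a ha'
      refine ⟨x (Fin.last (m + n)), ?_⟩
      show Fin.snoc (Fin.append a (ρ₁ a)) (x (Fin.last (m + n))) ∈ X
      rw [← he]
      show Fin.snoc (Fin.init x) (x (Fin.last (m + n))) ∈ X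
      rw [Fin.snoc_init_self]
      exact hx
    have hex : ∀ a, a ∈ (fun (x : Fin (m + (n + 1)) → ℝ) (i : Fin m) =>
          x (Fin.castAdd (n + 1) i)) '' X →
        ∃ y, Phi {t : ℝ | Fin.snoc (Fin.append a (ρ₁ a)) t ∈ X} y := by
      intro a ha
      obtain ⟨T, hT, hTe⟩ := fib_structured R hX (Fin.append a (ρ₁ a))
      exact Phi_exists T hT hTe (K2 a ha)
    have K4a : ∀ (a : Fin m → ℝ) (b : Fin n → ℝ),
        Fin.append a b ∈ Y ↔ ∃ t, Fin.append a (Fin.snoc b t) ∈ X := by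
      intro a b
      constructor
      · rintro ⟨x, hx, he⟩
        refine ⟨x (Fin.last (m + n)), ?_⟩
        rw [Fin.append_snoc, ← he]
        show Fin.snoc (Fin.init x) (x (Fin.last (m + n))) ∈ X
        rw [Fin.snoc_init_self]
        exact hx
      · rintro ⟨t, ht⟩
        rw [Fin.append_snoc] at ht
        exact ⟨Fin.snoc (Fin.append a b) t, ht, funext fun i => Fin.snoc_castSucc _ _ i⟩
    refine ⟨fun a => Fin.snoc (ρ₁ a)
      (pick {t : ℝ | Fin.snoc (Fin.append a (ρ₁ a)) t ∈ X}), ?_, ?_, ?_⟩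
    · -- graph definability
      refine R.toRealStructure.congr_mem
        (R.toRealStructure.inter_mem
          (R.toRealStructure.subst_mem Fin.castSucc hG₁) (Phi_set R hX)) ?_
      ext z
      simp only [Set.mem_setOf_eq, Set.mem_inter_iff]
      have ezc : (fun i : Fin (m + n) => z i.castSucc)
          = Fin.append (fun i : Fin m => z (Fin.castAdd (n + 1) i))
            (fun i : Fin n => z ((Fin.natAdd m i).castSucc)) := by
        funext i
        refine Fin.addCases (fun j => ?_) (fun j => ?_) i
        · rw [Fin.append_left]
          exact congrArg z (Fin.ext rfl)
        · rw [Fin.append_right]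
      constructor
      · rintro ⟨haX, hB⟩
        have hinit : (fun i : Fin n => z ((Fin.natAdd m i).castSucc))
            = ρ₁ (fun i : Fin m => z (Fin.castAdd (n + 1) i)) := by
          funext i
          have h := congrFun hB i.castSucc
          rw [Fin.snoc_castSucc] at h
          exact h
        have hlast := congrFun hB (Fin.last n)
        rw [Fin.snoc_last] at hlast
        have hc : (fun i : Fin (m + n) => z i.castSucc)
            = Fin.append (fun i : Fin m => z (Fin.castAdd (n + 1) i))
              (ρ₁ (fun i : Fin m => z (Fin.castAdd (n + 1) i))) := by
          rw [ezc, hinit]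
        refine ⟨⟨?_, ?_⟩, ?_⟩
        · show (fun i : Fin m => z (Fin.castAdd (n + 1) i)) ∈ _
          rw [← K1]
          exact haX
        · exact hinit
        · show Phi {t : ℝ | Fin.snoc (fun i : Fin (m + n) => z i.castSucc) t ∈ X}
            (z (Fin.last (m + n)))
          rw [hc]
          exact (Phi_iff_pick (hex _ haX) _).2 hlast
      · rintro ⟨⟨hC1, hC2⟩, hD⟩
        have haX : (fun i : Fin m => z (Fin.castAdd (n + 1) i)) ∈
            (fun (x : Fin (m + (n + 1)) → ℝ) (i : Fin m) => x (Fin.castAdd (n + 1) i)) '' X := by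
          rw [K1]
          exact hC1
        have hinit : (fun i : Fin n => z ((Fin.natAdd m i).castSucc))
            = ρ₁ (fun i : Fin m => z (Fin.castAdd (n + 1) i)) := hC2
        have hc : (fun i : Fin (m + n) => z i.castSucc)
            = Fin.append (fun i : Fin m => z (Fin.castAdd (n + 1) i))
              (ρ₁ (fun i : Fin m => z (Fin.castAdd (n + 1) i))) := by
          rw [ezc, hinit]
        have hD' : Phi {t : ℝ | Fin.snoc (Fin.append (fun i : Fin m => z (Fin.castAdd (n + 1) i))
            (ρ₁ (fun i : Fin m => z (Fin.castAdd (n + 1) i)))) t ∈ X} (z (Fin.last (m + n))) := by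
          rw [← hc]
          exact hD
        have hlast := (Phi_iff_pick (hex _ haX) _).1 hD'
        refine ⟨haX, ?_⟩
        funext i
        refine Fin.lastCases ?_ (fun j => ?_) i
        · rw [Fin.snoc_last]
          exact hlast
        · rw [Fin.snoc_castSucc]
          exact congrFun hinit j
    · -- selection property
      intro a ha
      show Fin.append a (Fin.snoc (ρ₁ a)
        (pick {t : ℝ | Fin.snoc (Fin.append a (ρ₁ a)) t ∈ X})) ∈ X
      rw [Fin.append_snoc]
      exact pick_mem (hex a ha)
    · -- dependence only on the fiber
      intro a ha a' ha' hfe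
      have hfe' : ∀ b : Fin (n + 1) → ℝ, Fin.append a b ∈ X ↔ Fin.append a' b ∈ X :=
        fun b => Set.ext_iff.1 hfe b
      have hYfe : {b : Fin n → ℝ | Fin.append a b ∈ Y} = {b : Fin n → ℝ | Fin.append a' b ∈ Y} := by
        ext b
        simp only [Set.mem_setOf_eq, K4a]
        exact exists_congr fun t => hfe' _
      have ha2 : a ∈ (fun (x : Fin (m + n) → ℝ) (i : Fin m) => x (Fin.castAdd n i)) '' Y := by
        rw [← K1]; exact ha
      have ha2' : a' ∈ (fun (x : Fin (m + n) → ℝ) (i : Fin m) => x (Fin.castAdd n i)) '' Y := by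
        rw [← K1]; exact ha'
      have hr : ρ₁ a = ρ₁ a' := hfib₁ a ha2 a' ha2' hYfe
      have hfib2 : {t : ℝ | Fin.snoc (Fin.append a (ρ₁ a)) t ∈ X}
          = {t : ℝ | Fin.snoc (Fin.append a' (ρ₁ a')) t ∈ X} := by
        ext t
        simp only [Set.mem_setOf_eq]
        rw [← Fin.append_snoc, ← Fin.append_snoc, ← hr]
        exact hfe' _
      beta_reduce
      rw [hfib2, hr]
end

section
/- (Existence of one-sided limits) Let 𝓡 be an o-minimal structure on ℝ and let f : (a,b) → ℝ be definable, where a < b and a may be -∞ and b may be +∞. Then for each c ∈ [a, b) the one-sided limit lim_{t ↓ c} f(t) exists in the extended reals ℝ ∪ {−∞, +∞}. -/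
open Filter Set Topology

lemma my_inter_mem (R : RealStructure) (n : ℕ) {A B : Set (Fin n → ℝ)}
    (hA : A ∈ R.sets n) (hB : B ∈ R.sets n) : A ∩ B ∈ R.sets n := by
  have h := R.compl_mem n _ (R.union_mem n _ _ (R.compl_mem n _ hA) (R.compl_mem n _ hB))
  simpa [Set.compl_union] using h

lemma my_slice_lt_mem (R : OminimalStructure) (r : ℝ) :
    {x : Fin 2 → ℝ | x 1 < r} ∈ R.sets 2 := by
  have h1 := R.prod_left_mem 2 _ R.lt_mem
  have h2 := R.prod_left_mem 1 _ (R.singleton_mem r)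
  have h3 := R.prod_left_mem 2 _ h2
  have h4 := my_inter_mem R.toRealStructure 3 h1 h3
  have h5 := R.proj_mem 2 _ h4
  have heq : (fun (x : Fin 3 → ℝ) (i : Fin 2) => x i.castSucc) ''
      ({x : Fin 3 → ℝ | (fun i : Fin 2 => x i.succ) ∈ {x : Fin 2 → ℝ | x 0 < x 1}} ∩
       {x : Fin 3 → ℝ | (fun i : Fin 2 => x i.succ) ∈
          {x : Fin 2 → ℝ | (fun i : Fin 1 => x i.succ) ∈ {x : Fin 1 → ℝ | x 0 = r}}}) =
      {x : Fin 2 → ℝ | x 1 < r} := by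
    ext y
    constructor
    · rintro ⟨x, ⟨hx1, hx2⟩, rfl⟩
      simp only [Set.mem_setOf_eq] at hx1 hx2 ⊢
      have e1 : (Fin.succ 0 : Fin 3) = 1 := rfl
      have e2 : (Fin.succ 1 : Fin 3) = 2 := rfl
      have e3 : ((1 : Fin 2).castSucc : Fin 3) = 1 := rfl
      rw [e3]
      rw [e1, e2] at hx1
      have e4 : ((Fin.succ 0 : Fin 2).succ : Fin 3) = 2 := rfl
      rw [e4] at hx2
      rw [hx2] at hx1; exact hx1
    · intro hy
      simp only [Set.mem_setOf_eq] at hy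
      refine ⟨![y 0, y 1, r], ⟨?_, ?_⟩, ?_⟩
      · simp only [Set.mem_setOf_eq]
        show (![y 0, y 1, r] : Fin 3 → ℝ) (Fin.succ 0) < ![y 0, y 1, r] (Fin.succ 1)
        simpa using hy
      · simp only [Set.mem_setOf_eq]
        show (![y 0, y 1, r] : Fin 3 → ℝ) ((Fin.succ 0 : Fin 2).succ) = r
        simp
      · funext i
        fin_cases i <;> simp
  rwa [heq] at h5

lemma my_sublevel_mem (R : OminimalStructure) (a b : EReal) (f : ℝ → ℝ)
    (hf : {x : Fin 2 → ℝ | a < (x 0 : EReal) ∧ (x 0 : EReal) < b ∧ x 1 = f (x 0)} ∈ R.sets 2)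
    (r : ℝ) :
    {x : Fin 1 → ℝ | a < (x 0 : EReal) ∧ (x 0 : EReal) < b ∧ f (x 0) < r} ∈ R.sets 1 := by
  have h4 := my_inter_mem R.toRealStructure 2 hf (my_slice_lt_mem R r)
  have h5 := R.proj_mem 1 _ h4
  have heq : (fun (x : Fin 2 → ℝ) (i : Fin 1) => x i.castSucc) ''
      ({x : Fin 2 → ℝ | a < (x 0 : EReal) ∧ (x 0 : EReal) < b ∧ x 1 = f (x 0)} ∩
        {x : Fin 2 → ℝ | x 1 < r}) =
      {x : Fin 1 → ℝ | a < (x 0 : EReal) ∧ (x 0 : EReal) < b ∧ f (x 0) < r} := by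
    ext y
    constructor
    · rintro ⟨x, ⟨⟨hx1, hx2, hx3⟩, hx4⟩, rfl⟩
      simp only [Set.mem_setOf_eq] at *
      have e : ((0 : Fin 1).castSucc : Fin 2) = 0 := rfl
      rw [e]
      exact ⟨hx1, hx2, hx3 ▸ hx4⟩
    · rintro ⟨hy1, hy2, hy3⟩
      refine ⟨![y 0, f (y 0)], ⟨⟨?_, ?_, ?_⟩, ?_⟩, ?_⟩
      · simpa using hy1
      · simpa using hy2
      · simp
      · simpa using hy3
      · funext i
        fin_cases i <;> simp
  rwa [heq] at h5

lemma my_dichotomy_single {l : Filter ℝ} {c : EReal}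
    (hA : ∀ p : ℝ, (p : EReal) ≤ c → ∀ᶠ t in l, p < t)
    (hB : ∀ p : ℝ, c < (p : EReal) → ∀ᶠ t in l, t < p)
    {I : Set ℝ} (hI : IsOpenIntervalOrPoint I) :
    (∀ᶠ t in l, t ∈ I) ∨ (∀ᶠ t in l, t ∉ I) := by
  rcases hI with ⟨p, q, rfl⟩ | ⟨p, rfl⟩ | ⟨p, rfl⟩ | rfl | ⟨p, rfl⟩
  · rcases le_or_gt (q : EReal) c with h | h
    · exact Or.inr ((hA q h).mono fun t ht hm => absurd hm.2 (not_lt.2 ht.le))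
    · rcases le_or_gt (p : EReal) c with h' | h'
      · exact Or.inl (((hA p h').and (hB q h)).mono fun t ht => ⟨ht.1, ht.2⟩)
      · exact Or.inr ((hB p h').mono fun t ht hm => absurd hm.1 (not_lt.2 ht.le))
  · rcases le_or_gt (p : EReal) c with h | h
    · exact Or.inl ((hA p h).mono fun t ht => ht)
    · exact Or.inr ((hB p h).mono fun t ht hm => absurd hm (not_lt.2 ht.le))
  · rcases le_or_gt (p : EReal) c with h | h
    · exact Or.inr ((hA p h).mono fun t ht hm => absurd hm (not_lt.2 ht.le))
    · exact Or.inl ((hB p h).mono fun t ht => ht)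
  · exact Or.inl (Eventually.of_forall fun t => trivial)
  · rcases le_or_gt (p : EReal) c with h | h
    · exact Or.inr ((hA p h).mono fun t ht hm => by
        rw [Set.mem_singleton_iff] at hm; exact absurd hm.symm (ne_of_lt ht))
    · exact Or.inr ((hB p h).mono fun t ht hm => by
        rw [Set.mem_singleton_iff] at hm; exact absurd hm (ne_of_lt ht))

lemma my_dichotomy_union {l : Filter ℝ} {c : EReal}
    (hA : ∀ p : ℝ, (p : EReal) ≤ c → ∀ᶠ t in l, p < t)
    (hB : ∀ p : ℝ, c < (p : EReal) → ∀ᶠ t in l, t < p)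
    (T : Finset (Set ℝ)) (hT : ∀ I ∈ T, IsOpenIntervalOrPoint I) :
    (∀ᶠ t in l, t ∈ ⋃ I ∈ T, I) ∨ (∀ᶠ t in l, t ∉ ⋃ I ∈ T, I) := by
  classical
  induction T using Finset.induction_on with
  | empty => exact Or.inr (Eventually.of_forall (by simp))
  | @insert J T hJT ih =>
    have hJ : IsOpenIntervalOrPoint J := hT J (Finset.mem_insert_self J T)
    have hT' : ∀ I ∈ T, IsOpenIntervalOrPoint I :=
      fun I hI => hT I (Finset.mem_insert_of_mem hI)
    rcases my_dichotomy_single hA hB hJ with h | h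
    · exact Or.inl (h.mono fun t ht => by
        simp only [Set.mem_iUnion]
        exact ⟨J, Finset.mem_insert_self J T, ht⟩)
    · rcases ih hT' with h' | h'
      · exact Or.inl (h'.mono fun t ht => by
          simp only [Set.mem_iUnion] at ht ⊢
          obtain ⟨I, hI, htI⟩ := ht
          exact ⟨I, Finset.mem_insert_of_mem hI, htI⟩)
      · refine Or.inr ((h.and h').mono fun t ⟨ht1, ht2⟩ hm => ?_)
        simp only [Set.mem_iUnion] at hm ht2
        obtain ⟨I, hI, htI⟩ := hm
        rcases Finset.mem_insert.1 hI with rfl | hI'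
        · exact ht1 htI
        · exact ht2 ⟨I, hI', htI⟩

/-- Existence of one-sided limits: a definable function on an interval (a, b)
(with possibly infinite endpoints) has a one-sided limit, in the extended reals,
from the right at every c ∈ [a, b). The filter `Filter.comap Real.toEReal (nhdsWithin c (Set.Ioi c))`
is the filter of real numbers t tending to c from the right (it is `atBot` when c = -∞). -/
theorem existence_of_one_sided_limits (R : OminimalStructure) (a b : EReal) (hab : a < b)
    (f : ℝ → ℝ)
    (hf : {x : Fin 2 → ℝ | a < (x 0 : EReal) ∧ (x 0 : EReal) < b ∧ x 1 = f (x 0)} ∈ R.sets 2)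
    (c : EReal) (hac : a ≤ c) (hcb : c < b) :
    ∃ L : EReal, Filter.Tendsto (fun t : ℝ => (f t : EReal))
      (Filter.comap Real.toEReal (nhdsWithin c (Set.Ioi c))) (nhds L) := by
  set l : Filter ℝ := Filter.comap Real.toEReal (nhdsWithin c (Set.Ioi c)) with hl
  have htend : Tendsto (fun t : ℝ => (t : EReal)) l (𝓝[>] c) := tendsto_comap
  have hgt : ∀ᶠ t : ℝ in l, c < (t : EReal) := htend.eventually eventually_mem_nhdsWithin
  have hA : ∀ p : ℝ, (p : EReal) ≤ c → ∀ᶠ t in l, p < t := by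
    intro p hp
    exact hgt.mono fun t ht => by exact_mod_cast lt_of_le_of_lt hp ht
  have htend' : Tendsto (fun t : ℝ => (t : EReal)) l (𝓝 c) :=
    htend.mono_right nhdsWithin_le_nhds
  have hB : ∀ p : ℝ, c < (p : EReal) → ∀ᶠ t in l, t < p := by
    intro p hp
    exact (htend'.eventually_lt_const hp).mono fun t ht => by exact_mod_cast ht
  have hne : l.NeBot := by
    refine Filter.comap_neBot fun U hU => ?_
    have hbasis := nhdsGT_basis_of_exists_gt (α := EReal) ⟨b, hcb⟩
    obtain ⟨u, hcu, hsub⟩ := hbasis.mem_iff.1 hU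
    obtain ⟨y, hy1, hy2⟩ := EReal.exists_between_coe_real hcu
    exact ⟨y, hsub ⟨hy1, hy2⟩⟩
  -- eventually in the domain
  have hdom : ∀ᶠ t : ℝ in l, a < (t : EReal) ∧ (t : EReal) < b := by
    have h1 : ∀ᶠ t : ℝ in l, a < (t : EReal) := hgt.mono fun t ht => lt_of_le_of_lt hac ht
    have h2 : ∀ᶠ t : ℝ in l, (t : EReal) < b := htend'.eventually_lt_const hcb
    exact h1.and h2
  -- the key dichotomy for sublevel sets
  have key : ∀ r : ℝ, (∀ᶠ t in l, f t < r) ∨ (∀ᶠ t in l, r ≤ f t) := by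
    intro r
    obtain ⟨T, hT, hTeq⟩ := (R.omin _).1 (my_sublevel_mem R a b f hf r)
    have hmem : ∀ t : ℝ, (a < (t : EReal) ∧ (t : EReal) < b ∧ f t < r) ↔ t ∈ ⋃ I ∈ T, I := by
      intro t
      have : (fun _ : Fin 1 => t) ∈
          {x : Fin 1 → ℝ | a < (x 0 : EReal) ∧ (x 0 : EReal) < b ∧ f (x 0) < r} ↔
          (fun _ : Fin 1 => t) ∈ (fun x : Fin 1 → ℝ => x 0) ⁻¹' ⋃ I ∈ T, I := by rw [hTeq]
      simpa using this
    rcases my_dichotomy_union hA hB T hT with h | h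
    · left
      refine (h.and hdom).mono fun t ht => ?_
      exact (((hmem t).2 ht.1)).2.2
    · right
      refine (h.and hdom).mono fun t ht => ?_
      by_contra hlt
      exact ht.1 ((hmem t).1 ⟨ht.2.1, ht.2.2, not_le.1 hlt⟩)
  by_cases hbot : ∀ r : ℝ, ∀ᶠ t in l, f t < r
  · refine ⟨⊥, EReal.tendsto_nhds_bot_iff_real.2 fun r => ?_⟩
    exact (hbot r).mono fun t ht => by exact_mod_cast ht
  · push_neg at hbot
    obtain ⟨r0, hr0⟩ := hbot
    have E0 : ∀ᶠ t in l, r0 ≤ f t := (key r0).resolve_left (fun h => hr0 (h.mono fun t ht => not_le.2 ht))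
    by_cases htop : ∀ r : ℝ, ∀ᶠ t in l, r ≤ f t
    · refine ⟨⊤, EReal.tendsto_nhds_top_iff_real.2 fun r => ?_⟩
      exact (htop (r + 1)).mono fun t ht => by
        exact_mod_cast lt_of_lt_of_le (lt_add_one r) ht
    · push_neg at htop
      obtain ⟨r1, hr1⟩ := htop
      have hP1 : ∀ᶠ t in l, f t < r1 := by
        rcases key r1 with h | h
        · exact h
        · exact absurd (h.mono fun t ht => not_lt.2 ht) hr1
      set S : Set ℝ := {r : ℝ | ∀ᶠ t in l, f t < r} with hS
      have hSne : S.Nonempty := ⟨r1, hP1⟩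
      have hSbdd : BddBelow S := by
        refine ⟨r0, fun r hr => ?_⟩
        obtain ⟨t, ht1, ht2⟩ := (E0.and hr).exists
        exact le_of_lt (lt_of_le_of_lt ht1 ht2)
      set s := sInf S with hs
      refine ⟨(s : EReal), EReal.tendsto_coe.2 (tendsto_order.2 ⟨?_, ?_⟩)⟩
      · intro r hr
        obtain ⟨r', hr'1, hr'2⟩ := exists_between hr
        have hr'nS : r' ∉ S := fun hmem => absurd (csInf_le hSbdd hmem) (not_le.2 hr'2)
        have : ∀ᶠ t in l, r' ≤ f t := (key r').resolve_left hr'nS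
        exact this.mono fun t ht => lt_of_lt_of_le hr'1 ht
      · intro r hr
        obtain ⟨r', hr'S, hr'2⟩ := exists_lt_of_csInf_lt hSne hr
        have hr'S' : ∀ᶠ t in l, f t < r' := hr'S
        exact hr'S'.mono fun t ht => lt_trans ht hr'2
end
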